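/- Let H_j(x,y) = Σ_{k=0}^{3} a_{jk} χ_{Υ_k(C_4×[0,1])}(x,y) with the property that a_{j0} + a_{j2} = a_{j1} + a_{j3} for each j. Then for any word ω = j_K ... j_1 in {0,1,2,3}, ∫_{[0,1]} ∏_{k=1}^{K} 2 H_{j_k}(R^{k-1}(x,y)) dλ(y) = ∏_{k=1}^{K} 2 ∫_{[0,1]} H_{j_k}(4^{k-1}x mod 1, y) dλ(y) for μ_4-a.e. x, and each factor equals a_{j_k,0} + a_{j_k,2}. -/

import Mathlib

open MeasureTheory Set Filter Topology
open scoped ENNReal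

/-- The Cantor-4 set. -/
def cantor4 : Set ℝ :=
  {x | ∃ a : ℕ → ℕ, (∀ k, a k = 0 ∨ a k = 2) ∧ x = ∑' k : ℕ, (a k : ℝ) / 4 ^ (k + 1)}

/-- The four maps of the IFS on ℝ². -/
noncomputable def Ups : Fin 4 → ℝ × ℝ → ℝ × ℝ :=
  ![fun z => (z.1 / 4, z.2 / 2), fun z => ((z.1 + 2) / 4, z.2 / 2),
    fun z => (z.1 / 4, (z.2 + 1) / 2), fun z => ((z.1 + 2) / 4, (z.2 + 1) / 2)]

/-- `R(x,y) = (4x mod 1, 2y mod 1)`. -/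
noncomputable def Rmap : ℝ × ℝ → ℝ × ℝ :=
  fun z => (Int.fract (4 * z.1), Int.fract (2 * z.2))

/-- The step functions `H_j = Σ_k a_{jk} χ_{Υ_k(C₄×[0,1])}`. -/
noncomputable def Hstep (a : Fin 4 → Fin 4 → ℂ) (j : Fin 4) (z : ℝ × ℝ) : ℂ :=
  ∑ k : Fin 4, a j k * indicator (Ups k '' (cantor4 ×ˢ Icc (0 : ℝ) 1)) (fun _ => (1 : ℂ)) z


section Aux

lemma digit_le {a : ℕ → ℕ} (ha : ∀ k, a k = 0 ∨ a k = 2) (k : ℕ) : (a k : ℝ) ≤ 2 := by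
  rcases ha k with h | h <;> simp [h]

lemma geom_summable : Summable (fun k : ℕ => 2 * (1/4 : ℝ) ^ (k+1)) := by
  have h : (fun k : ℕ => 2 * (1/4 : ℝ) ^ (k+1)) = fun k : ℕ => (1/2 : ℝ) * (1/4) ^ k := by
    funext k; rw [pow_succ]; ring
  rw [h]
  exact (summable_geometric_of_lt_one (by norm_num) (by norm_num)).mul_left _

lemma digit_div_le {a : ℕ → ℕ} (ha : ∀ k, a k = 0 ∨ a k = 2) (k : ℕ) :
    (a k : ℝ) / 4 ^ (k + 1) ≤ 2 * (1/4 : ℝ) ^ (k+1) := by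
  calc (a k : ℝ) / 4 ^ (k + 1) ≤ 2 / 4 ^ (k+1) := by
        gcongr; exact digit_le ha k
    _ = 2 * (1/4 : ℝ) ^ (k+1) := by rw [div_eq_mul_inv, one_div, inv_pow]

lemma cantor4_summable {a : ℕ → ℕ} (ha : ∀ k, a k = 0 ∨ a k = 2) :
    Summable (fun k => (a k : ℝ) / 4 ^ (k + 1)) :=
  Summable.of_nonneg_of_le (fun k => by positivity) (digit_div_le ha) geom_summable

lemma geom_sum_val : (∑' k : ℕ, 2 * (1/4 : ℝ) ^ (k+1)) = 2/3 := by
  have h : (fun k : ℕ => 2 * (1/4 : ℝ) ^ (k+1)) = fun k : ℕ => (1/2 : ℝ) * (1/4) ^ k := by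
    funext k; rw [pow_succ]; ring
  rw [h, tsum_mul_left, tsum_geometric_of_lt_one (by norm_num) (by norm_num)]
  norm_num

lemma cantor4_subset : cantor4 ⊆ Icc 0 (2/3 : ℝ) := by
  rintro x ⟨a, ha, rfl⟩
  refine ⟨tsum_nonneg (fun k => by positivity), ?_⟩
  calc (∑' k : ℕ, (a k : ℝ) / 4 ^ (k + 1))
      ≤ ∑' k : ℕ, 2 * (1/4 : ℝ) ^ (k+1) :=
        Summable.tsum_le_tsum (digit_div_le ha) (cantor4_summable ha) geom_summable
    _ = 2/3 := geom_sum_val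

lemma cantor4_shift {a : ℕ → ℕ} (ha : ∀ k, a k = 0 ∨ a k = 2) :
    4 * (∑' k : ℕ, (a k : ℝ) / 4 ^ (k + 1))
      = (a 0 : ℝ) + ∑' k : ℕ, (a (k+1) : ℝ) / 4 ^ (k + 1) := by
  have hsum : Summable (fun k => (a k : ℝ) / 4 ^ (k+1)) := cantor4_summable ha
  have h4 : (4 : ℝ) * (∑' k : ℕ, (a k : ℝ) / 4 ^ (k + 1)) = ∑' k : ℕ, (a k : ℝ) / 4 ^ k := by
    rw [← tsum_mul_left]
    congr 1; funext k
    rw [pow_succ]; field_simp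
  rw [h4]
  have hsum' : Summable (fun k => (a k : ℝ) / 4 ^ k) := by
    have h := hsum.mul_left 4
    refine h.congr (fun k => ?_)
    rw [pow_succ]; field_simp
  rw [Summable.tsum_eq_zero_add hsum']
  simp

lemma cantor4_cases {x : ℝ} (hx : x ∈ cantor4) :
    (4 * x ∈ cantor4) ∨ (4 * x - 2 ∈ cantor4) := by
  obtain ⟨a, ha, rfl⟩ := hx
  have hs := cantor4_shift ha
  have htail : (∑' k : ℕ, (a (k+1) : ℝ) / 4 ^ (k + 1)) ∈ cantor4 :=
    ⟨fun k => a (k+1), fun k => ha (k+1), rfl⟩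
  rcases ha 0 with h0 | h0
  · left; rw [hs, h0]; simpa using htail
  · right; rw [hs, h0]; push_cast; convert htail using 1; ring

lemma cantor4_not_both {x : ℝ} : ¬(4 * x ∈ cantor4 ∧ 4 * x - 2 ∈ cantor4) := by
  rintro ⟨h1, h2⟩
  have b1 := (cantor4_subset h1).2
  have b2 := (cantor4_subset h2).1
  linarith

lemma fract_int_mul_fract (n : ℤ) (t : ℝ) :
    Int.fract ((n : ℝ) * Int.fract t) = Int.fract ((n : ℝ) * t) := by
  have h : (n : ℝ) * Int.fract t = (n : ℝ) * t - (n * ⌊t⌋ : ℤ) := by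
    rw [Int.fract]; push_cast; ring
  rw [h, Int.fract_sub_intCast]

lemma cantor4_fract {x : ℝ} (hx : x ∈ cantor4) : Int.fract (4 * x) ∈ cantor4 := by
  rcases cantor4_cases hx with h | h
  · have hb := cantor4_subset h
    rwa [Int.fract_eq_self.2 ⟨hb.1, by linarith [hb.2]⟩]
  · have hb := cantor4_subset h
    have he : Int.fract (4 * x) = 4 * x - 2 := by
      calc Int.fract (4 * x) = Int.fract ((4 * x - 2) + ((2 : ℤ) : ℝ)) := by norm_num
        _ = Int.fract (4 * x - 2) := Int.fract_add_intCast _ _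
        _ = 4 * x - 2 := Int.fract_eq_self.2 ⟨hb.1, by linarith [hb.2]⟩
    rwa [he]

lemma cantor4_self_fract {x : ℝ} (hx : x ∈ cantor4) : Int.fract x = x :=
  Int.fract_eq_self.2 ⟨(cantor4_subset hx).1, by linarith [(cantor4_subset hx).2]⟩

lemma fract_four_pow_succ (n : ℕ) (x : ℝ) :
    Int.fract (4 ^ (n+1) * x) = Int.fract (4 * Int.fract (4 ^ n * x)) := by
  rw [show ((4:ℝ)) = ((4:ℤ):ℝ) by norm_num, fract_int_mul_fract]
  norm_num [pow_succ]
  ring_nf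

lemma cantor4_fract_pow {x : ℝ} (hx : x ∈ cantor4) :
    ∀ i : ℕ, Int.fract (4 ^ i * x) ∈ cantor4 := by
  intro i
  induction i with
  | zero => simpa [cantor4_self_fract hx]
  | succ n ih => rw [fract_four_pow_succ]; exact cantor4_fract ih

def Kset : ℕ → Set ℝ
  | 0 => Icc 0 (2/3)
  | (n+1) => (fun x => 4*x) ⁻¹' Kset n ∪ (fun x => 4*x - 2) ⁻¹' Kset n

lemma Kset_meas (n : ℕ) : MeasurableSet (Kset n) := by
  induction n with
  | zero => exact measurableSet_Icc
  | succ n ih =>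
    refine MeasurableSet.union (ih.preimage (measurable_id.const_mul 4)) (ih.preimage ((measurable_id.const_mul 4).sub measurable_const))

lemma Kset_subset (n : ℕ) : Kset n ⊆ Icc 0 (2/3 : ℝ) := by
  induction n with
  | zero => exact fun x hx => hx
  | succ n ih =>
    rintro x (hx | hx)
    · have h2 : (0:ℝ) ≤ 4*x ∧ 4*x ≤ 2/3 := by simpa [mem_Icc] using ih hx
      exact ⟨by linarith [h2.1], by linarith [h2.2]⟩
    · have h2 : (0:ℝ) ≤ 4*x - 2 ∧ 4*x - 2 ≤ 2/3 := by simpa [mem_Icc] using ih hx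
      exact ⟨by linarith [h2.1], by linarith [h2.2]⟩

lemma Kset_dichotomy {n : ℕ} {x : ℝ} (hx : x ∈ Kset (n+1)) :
    (x ≤ 1/6 ∧ 4*x ∈ Kset n) ∨ (1/2 ≤ x ∧ 4*x - 2 ∈ Kset n) := by
  rcases hx with hx | hx
  · have h2 : (0:ℝ) ≤ 4*x ∧ 4*x ≤ 2/3 := by simpa [mem_Icc] using Kset_subset n hx
    exact Or.inl ⟨by linarith [h2.2], hx⟩
  · have h2 : (0:ℝ) ≤ 4*x - 2 ∧ 4*x - 2 ≤ 2/3 := by simpa [mem_Icc] using Kset_subset n hx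
    exact Or.inr ⟨by linarith [h2.1], hx⟩

noncomputable def cseq (x : ℝ) : ℕ → ℝ
  | 0 => x
  | (k+1) => if cseq x k ≤ 1/6 then 4 * cseq x k else 4 * cseq x k - 2

noncomputable def cdig (x : ℝ) (k : ℕ) : ℕ := if cseq x k ≤ 1/6 then 0 else 2

lemma cseq_succ (x : ℝ) (k : ℕ) : cseq x (k+1) = 4 * cseq x k - (cdig x k : ℝ) := by
  rw [cseq, cdig]
  split_ifs <;> simp

lemma cdig_mem (x : ℝ) (k : ℕ) : cdig x k = 0 ∨ cdig x k = 2 := by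
  rw [cdig]; split_ifs <;> simp

lemma cseq_mem {x : ℝ} (hx : ∀ n, x ∈ Kset n) : ∀ k n, cseq x k ∈ Kset n := by
  intro k
  induction k with
  | zero => exact hx
  | succ k ih =>
    intro n
    rcases Kset_dichotomy (ih (n+1)) with ⟨h1, h2⟩ | ⟨h1, h2⟩
    · rw [cseq, if_pos h1]; exact h2
    · rw [cseq, if_neg (by intro h; linarith)]; exact h2

lemma cseq_partial {x : ℝ} : ∀ n : ℕ,
    x = (∑ k ∈ Finset.range n, (cdig x k : ℝ) / 4 ^ (k+1)) + cseq x n / 4 ^ n := by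
  intro n
  induction n with
  | zero => simp [cseq]
  | succ n ih =>
    have h := cseq_succ x n
    have h4 : (4:ℝ) ^ (n+1) = 4 ^ n * 4 := pow_succ 4 n
    have key : cseq x n / 4 ^ n
        = (cdig x n : ℝ) / 4 ^ (n+1) + cseq x (n+1) / 4 ^ (n+1) := by
      rw [h, h4]
      field_simp
      ring
    calc x = (∑ k ∈ Finset.range n, (cdig x k : ℝ) / 4 ^ (k+1)) + cseq x n / 4 ^ n := ih
      _ = (∑ k ∈ Finset.range (n+1), (cdig x k : ℝ) / 4 ^ (k+1)) + cseq x (n+1) / 4 ^ (n+1) := by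
          rw [Finset.sum_range_succ, key]; ring

lemma iInter_Kset_subset_cantor4 : (⋂ n, Kset n) ⊆ cantor4 := by
  intro x hx
  rw [mem_iInter] at hx
  refine ⟨cdig x, cdig_mem x, ?_⟩
  have hsum : Summable (fun k => (cdig x k : ℝ) / 4 ^ (k+1)) := cantor4_summable (cdig_mem x)
  have htends : Tendsto (fun n => ∑ k ∈ Finset.range n, (cdig x k : ℝ) / 4 ^ (k+1))
      atTop (nhds x) := by
    rw [tendsto_iff_dist_tendsto_zero]
    have hb : ∀ n : ℕ, dist (∑ k ∈ Finset.range n, (cdig x k : ℝ) / 4 ^ (k+1)) x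
        ≤ (2/3) * (1/4 : ℝ) ^ n := by
      intro n
      have hm : cseq x n ∈ Icc (0:ℝ) (2/3) := Kset_subset 0 (cseq_mem hx n 0)
      rw [Real.dist_eq]
      have he : (∑ k ∈ Finset.range n, (cdig x k : ℝ) / 4 ^ (k+1)) - x
          = -(cseq x n / 4 ^ n) := by
        have hp := cseq_partial (x := x) n
        linarith
      rw [he, abs_neg, abs_of_nonneg (div_nonneg hm.1 (by positivity))]
      calc cseq x n / 4 ^ n ≤ (2/3) / 4 ^ n := by gcongr; exact hm.2
        _ = 2/3 * (1/4 : ℝ)^n := by rw [div_eq_mul_inv, one_div, inv_pow]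
    have h2 : Tendsto (fun n : ℕ => (2/3 : ℝ) * (1/4)^n) atTop (nhds 0) := by
      have := tendsto_pow_atTop_nhds_zero_of_lt_one (r := (1/4:ℝ)) (by norm_num) (by norm_num)
      simpa using this.const_mul (2/3 : ℝ)
    exact squeeze_zero (fun n => dist_nonneg) hb h2
  exact (tendsto_nhds_unique (hsum.hasSum.tendsto_sum_nat) htends).symm

lemma lintegral_indicator_comp (μ : Measure ℝ) {s : Set ℝ} (hs : MeasurableSet s)
    {f : ℝ → ℝ} (hf : Measurable f) :
    ∫⁻ x, s.indicator (fun _ => (1:ℝ≥0∞)) (f x) ∂μ = μ (f ⁻¹' s) := by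
  have h : (fun x => s.indicator (fun _ => (1:ℝ≥0∞)) (f x))
      = (f ⁻¹' s).indicator (fun _ => (1:ℝ≥0∞)) := by
    funext x
    by_cases h : f x ∈ s
    · rw [indicator_of_mem h, indicator_of_mem (by exact h)]
    · rw [indicator_of_notMem h, indicator_of_notMem (by exact h)]
  rw [h, lintegral_indicator (hs.preimage hf)]
  simp

lemma half_sum_same (b : ℝ≥0∞) : (1/2 : ℝ≥0∞) * (b + b) = b := by
  rw [← two_mul, ← mul_assoc, one_div, ENNReal.inv_mul_cancel two_ne_zero ENNReal.ofNat_ne_top,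
    one_mul]
section
variable (μ₄
 : Measure ℝ) [IsProbabilityMeasure μ₄]
  (hμ₄ : ∀ φ : ℝ → ℝ≥0∞, Measurable φ →
      ∫⁻ x, φ x ∂μ₄ =
        (1 / 2) * (∫⁻ x, φ (x / 4) ∂μ₄ + ∫⁻ x, φ ((x + 2) / 4) ∂μ₄))

include hμ₄

lemma mu4_split {s : Set ℝ} (hs : MeasurableSet s) :
    μ₄ s = (1/2) * (μ₄ ((fun x : ℝ => x / 4) ⁻¹' s) + μ₄ ((fun x : ℝ => (x + 2) / 4) ⁻¹' s)) := by
  have hf1 : Measurable (fun x : ℝ => x / 4) := by fun_prop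
  have hf2 : Measurable (fun x : ℝ => (x + 2) / 4) := by fun_prop
  have key := hμ₄ (s.indicator (fun _ => 1)) (measurable_const.indicator hs)
  rwa [lintegral_indicator hs, lintegral_indicator_comp μ₄ hs hf1,
    lintegral_indicator_comp μ₄ hs hf2, setLIntegral_one] at key

lemma mu4_Ioi_zero : μ₄ (Ioi (2/3 : ℝ)) = 0 := by
  have hstep : ∀ u : ℝ, μ₄ (Ioi u) ≤ μ₄ (Ioi (4*u - 2)) := by
    intro u
    have h1 : (fun x : ℝ => x / 4) ⁻¹' (Ioi u) = Ioi (4*u) := by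
      ext x; simp only [mem_preimage, mem_Ioi]; constructor <;> intro h <;> linarith
    have h2 : (fun x : ℝ => (x + 2) / 4) ⁻¹' (Ioi u) = Ioi (4*u - 2) := by
      ext x; simp only [mem_preimage, mem_Ioi]; constructor <;> intro h <;> linarith
    rw [mu4_split μ₄ hμ₄ measurableSet_Ioi, h1, h2]
    calc (1/2 : ℝ≥0∞) * (μ₄ (Ioi (4*u)) + μ₄ (Ioi (4*u - 2)))
        ≤ (1/2) * (μ₄ (Ioi (4*u - 2)) + μ₄ (Ioi (4*u - 2))) := by
          exact mul_le_mul_right (add_le_add_left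
            (measure_mono (μ := μ₄) (Ioi_subset_Ioi (by linarith : (4*u-2:ℝ) ≤ 4*u))) _) _
      _ = μ₄ (Ioi (4*u - 2)) := half_sum_same _
  -- iterate
  have key : ∀ t : ℝ, 2/3 < t → μ₄ (Ioi t) = 0 := by
    intro t ht
    set v : ℕ → ℝ := fun n => 2/3 + 4^n * (t - 2/3) with hv
    have hv0 : v 0 = t := by simp [hv]
    have hvs : ∀ n, v (n+1) = 4 * v n - 2 := by
      intro n; simp only [hv, pow_succ]; ring
    have hle : ∀ n, μ₄ (Ioi t) ≤ μ₄ (Ioi (v n)) := by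
      intro n
      induction n with
      | zero => rw [hv0]
      | succ n ih => rw [hvs]; exact ih.trans (hstep (v n))
    have hvmono : Monotone v := by
      intro m n hmn
      simp only [hv]
      gcongr
      · linarith
    have hvtop : Tendsto v atTop atTop := by
      apply tendsto_atTop_add_const_left
      apply Tendsto.atTop_mul_const (by linarith)
      exact tendsto_pow_atTop_atTop_of_one_lt (by norm_num)
    have hempty : (⋂ n, Ioi (v n)) = ∅ := by
      ext x
      simp only [mem_iInter, mem_Ioi, mem_empty_iff_false, iff_false, not_forall, not_lt]
      rcases (hvtop.eventually_ge_atTop x).exists with ⟨n, hn⟩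
      exact ⟨n, hn⟩
    have htends : Tendsto (fun n => μ₄ (Ioi (v n))) atTop (𝓝 (μ₄ (⋂ n, Ioi (v n)))) := by
      exact tendsto_measure_iInter_atTop (fun n => measurableSet_Ioi.nullMeasurableSet)
        (fun m n hmn => Ioi_subset_Ioi (hvmono hmn)) ⟨0, measure_ne_top _ _⟩
    rw [hempty, measure_empty] at htends
    have := ge_of_tendsto' htends hle
    exact le_antisymm this zero_le
  have hcover : Ioi (2/3 : ℝ) ⊆ ⋃ n : ℕ, Ioi (2/3 + 1/(n+1)) := by
    intro x hx
    simp only [mem_Ioi] at hx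
    obtain ⟨n, hn⟩ := exists_nat_one_div_lt (show (0:ℝ) < x - 2/3 by linarith)
    exact mem_iUnion.2 ⟨n, by simp only [mem_Ioi]; push_cast; linarith⟩
  refine le_antisymm ((measure_mono hcover).trans ?_) zero_le
  rw [measure_iUnion_null (fun n => key _ (lt_add_of_pos_right _ (by positivity)))]

lemma mu4_Iio_zero : μ₄ (Iio (0 : ℝ)) = 0 := by
  have hstep : ∀ u : ℝ, μ₄ (Iio u) ≤ μ₄ (Iio (4*u)) := by
    intro u
    have h1 : (fun x : ℝ => x / 4) ⁻¹' (Iio u) = Iio (4*u) := by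
      ext x; simp only [mem_preimage, mem_Iio]; constructor <;> intro h <;> linarith
    have h2 : (fun x : ℝ => (x + 2) / 4) ⁻¹' (Iio u) = Iio (4*u - 2) := by
      ext x; simp only [mem_preimage, mem_Iio]; constructor <;> intro h <;> linarith
    rw [mu4_split μ₄ hμ₄ measurableSet_Iio, h1, h2]
    calc (1/2 : ℝ≥0∞) * (μ₄ (Iio (4*u)) + μ₄ (Iio (4*u - 2)))
        ≤ (1/2) * (μ₄ (Iio (4*u)) + μ₄ (Iio (4*u))) := by
          exact mul_le_mul_right (add_le_add_right
            (measure_mono (μ := μ₄) (Iio_subset_Iio (by linarith : (4*u-2:ℝ) ≤ 4*u))) _) _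
      _ = μ₄ (Iio (4*u)) := half_sum_same _
  have key : ∀ t : ℝ, t < 0 → μ₄ (Iio t) = 0 := by
    intro t ht
    set v : ℕ → ℝ := fun n => 4^n * t with hv
    have hv0 : v 0 = t := by simp [hv]
    have hvs : ∀ n, v (n+1) = 4 * v n := by
      intro n; simp only [hv, pow_succ]; ring
    have hle : ∀ n, μ₄ (Iio t) ≤ μ₄ (Iio (v n)) := by
      intro n
      induction n with
      | zero => rw [hv0]
      | succ n ih => rw [hvs]; exact ih.trans (hstep (v n))
    have hvanti : Antitone v := by
      intro m n hmn
      simp only [hv]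
      have : (4:ℝ)^m ≤ 4^n := by gcongr; norm_num
      nlinarith
    have hempty : (⋂ n, Iio (v n)) = ∅ := by
      ext x
      simp only [mem_iInter, mem_Iio, mem_empty_iff_false, iff_false, not_forall, not_lt]
      have h4 : Tendsto (fun n : ℕ => (4:ℝ)^n) atTop atTop :=
        tendsto_pow_atTop_atTop_of_one_lt (by norm_num)
      rcases (h4.eventually_ge_atTop (x/t)).exists with ⟨n, hn⟩
      refine ⟨n, ?_⟩
      have : (4:ℝ)^n * t ≤ (x/t) * t := by
        rw [mul_comm ((4:ℝ)^n) t, mul_comm (x/t) t]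
        exact mul_le_mul_of_nonpos_left hn (le_of_lt ht)
      have hxt : (x/t) * t = x := div_mul_cancel₀ x (ne_of_lt ht)
      simp only [hv]
      linarith
    have htends : Tendsto (fun n => μ₄ (Iio (v n))) atTop (𝓝 (μ₄ (⋂ n, Iio (v n)))) := by
      exact tendsto_measure_iInter_atTop (fun n => measurableSet_Iio.nullMeasurableSet)
        (fun m n hmn => Iio_subset_Iio (hvanti hmn)) ⟨0, measure_ne_top _ _⟩
    rw [hempty, measure_empty] at htends
    have := ge_of_tendsto' htends hle
    exact le_antisymm this zero_le
  have hcover : Iio (0 : ℝ) ⊆ ⋃ n : ℕ, Iio (-(1/(n+1))) := by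
    intro x hx
    simp only [mem_Iio] at hx
    obtain ⟨n, hn⟩ := exists_nat_one_div_lt (show (0:ℝ) < -x by linarith)
    exact mem_iUnion.2 ⟨n, by simp only [mem_Iio]; push_cast; linarith⟩
  refine le_antisymm ((measure_mono hcover).trans ?_) zero_le
  rw [measure_iUnion_null (fun n => key _ (neg_lt_zero.mpr (by positivity)))]

lemma mu4_Icc : μ₄ (Icc 0 (2/3 : ℝ)) = 1 := by
  refine le_antisymm prob_le_one ?_
  have hcover : (univ : Set ℝ) ⊆ Icc 0 (2/3) ∪ (Iio 0 ∪ Ioi (2/3)) := by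
    intro x _
    rcases lt_or_ge x 0 with h | h
    · exact Or.inr (Or.inl h)
    rcases le_or_gt x (2/3) with h2 | h2
    · exact Or.inl ⟨h, h2⟩
    · exact Or.inr (Or.inr h2)
  calc (1:ℝ≥0∞) = μ₄ univ := (measure_univ).symm
    _ ≤ μ₄ (Icc 0 (2/3)) + μ₄ (Iio 0 ∪ Ioi (2/3)) :=
        (measure_mono hcover).trans (measure_union_le _ _)
    _ = μ₄ (Icc 0 (2/3)) := by
        rw [measure_union_null_iff.2 ⟨mu4_Iio_zero μ₄ hμ₄, mu4_Ioi_zero μ₄ hμ₄⟩, add_zero]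
end


lemma Kset_prob (μ₄ : Measure ℝ) [IsProbabilityMeasure μ₄]
    (hμ₄ : ∀ φ : ℝ → ℝ≥0∞, Measurable φ →
      ∫⁻ x, φ x ∂μ₄ =
        (1 / 2) * (∫⁻ x, φ (x / 4) ∂μ₄ + ∫⁻ x, φ ((x + 2) / 4) ∂μ₄)) :
    ∀ n, μ₄ (Kset n) = 1 := by
  intro n
  induction n with
  | zero => exact mu4_Icc μ₄ hμ₄
  | succ n ih =>
    have key := mu4_split μ₄ hμ₄ (Kset_meas (n+1))
    have hsub1 : Kset n ⊆ (fun x : ℝ => x / 4) ⁻¹' Kset (n+1) := by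
      intro x hxn
      left
      show (4 : ℝ) * (x / 4) ∈ Kset n
      rw [show (4 : ℝ) * (x / 4) = x by ring]
      exact hxn
    have hsub2 : Kset n ⊆ (fun x : ℝ => (x + 2) / 4) ⁻¹' Kset (n+1) := by
      intro x hxn
      right
      show (4 : ℝ) * ((x + 2) / 4) - 2 ∈ Kset n
      rw [show (4 : ℝ) * ((x + 2) / 4) - 2 = x by ring]
      exact hxn
    have hle : (1 : ℝ≥0∞) ≤ μ₄ (Kset (n+1)) := by
      rw [key]
      calc (1 : ℝ≥0∞) = 1/2 * (1 + 1) := by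
            rw [half_sum_same 1]
        _ ≤ 1/2 * (μ₄ ((fun x : ℝ => x / 4) ⁻¹' Kset (n+1))
              + μ₄ ((fun x : ℝ => (x + 2) / 4) ⁻¹' Kset (n+1))) := by
            apply mul_le_mul_right
            apply add_le_add
            · rw [← ih]; exact measure_mono hsub1
            · rw [← ih]; exact measure_mono hsub2
    exact le_antisymm prob_le_one hle

lemma Ups_zero : Ups 0 = fun z => (z.1 / 4, z.2 / 2) := rfl
lemma Ups_one : Ups 1 = fun z => ((z.1 + 2) / 4, z.2 / 2) := rfl
lemma Ups_two : Ups 2 = fun z => (z.1 / 4, (z.2 + 1) / 2) := rfl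
lemma Ups_three : Ups 3 = fun z => ((z.1 + 2) / 4, (z.2 + 1) / 2) := rfl

lemma mem_Ups0 {p : ℝ × ℝ} :
    p ∈ Ups 0 '' (cantor4 ×ˢ Icc (0 : ℝ) 1) ↔ 4 * p.1 ∈ cantor4 ∧ p.2 ∈ Icc (0:ℝ) 2⁻¹ := by
  rw [Ups_zero]
  constructor
  · rintro ⟨⟨u, v⟩, ⟨hu, hv⟩, heq⟩
    obtain ⟨h1, h2⟩ := Prod.mk.injEq .. ▸ heq
    simp only at h1 h2
    rw [← h1, ← h2]
    refine ⟨by rwa [show 4 * (u/4) = u by ring], ?_⟩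
    simp only [mem_Icc] at hv ⊢
    constructor <;> linarith [hv.1, hv.2]
  · rintro ⟨h1, h2⟩
    refine ⟨(4 * p.1, 2 * p.2), ⟨h1, ?_⟩, ?_⟩
    · simp only [mem_Icc] at h2 ⊢; constructor <;> linarith [h2.1, h2.2]
    · simp only; rw [Prod.mk.injEq]; constructor <;> ring

lemma mem_Ups1 {p : ℝ × ℝ} :
    p ∈ Ups 1 '' (cantor4 ×ˢ Icc (0 : ℝ) 1) ↔ 4 * p.1 - 2 ∈ cantor4 ∧ p.2 ∈ Icc (0:ℝ) 2⁻¹ := by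
  rw [Ups_one]
  constructor
  · rintro ⟨⟨u, v⟩, ⟨hu, hv⟩, heq⟩
    obtain ⟨h1, h2⟩ := Prod.mk.injEq .. ▸ heq
    simp only at h1 h2
    rw [← h1, ← h2]
    refine ⟨by rwa [show 4 * ((u+2)/4) - 2 = u by ring], ?_⟩
    simp only [mem_Icc] at hv ⊢
    constructor <;> linarith [hv.1, hv.2]
  · rintro ⟨h1, h2⟩
    refine ⟨(4 * p.1 - 2, 2 * p.2), ⟨h1, ?_⟩, ?_⟩
    · simp only [mem_Icc] at h2 ⊢; constructor <;> linarith [h2.1, h2.2]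
    · simp only; rw [Prod.mk.injEq]; constructor <;> ring

lemma mem_Ups2 {p : ℝ × ℝ} :
    p ∈ Ups 2 '' (cantor4 ×ˢ Icc (0 : ℝ) 1) ↔ 4 * p.1 ∈ cantor4 ∧ p.2 ∈ Icc (2⁻¹:ℝ) 1 := by
  rw [Ups_two]
  constructor
  · rintro ⟨⟨u, v⟩, ⟨hu, hv⟩, heq⟩
    obtain ⟨h1, h2⟩ := Prod.mk.injEq .. ▸ heq
    simp only at h1 h2
    rw [← h1, ← h2]
    refine ⟨by rwa [show 4 * (u/4) = u by ring], ?_⟩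
    simp only [mem_Icc] at hv ⊢
    constructor <;> linarith [hv.1, hv.2]
  · rintro ⟨h1, h2⟩
    refine ⟨(4 * p.1, 2 * p.2 - 1), ⟨h1, ?_⟩, ?_⟩
    · simp only [mem_Icc] at h2 ⊢; constructor <;> linarith [h2.1, h2.2]
    · simp only; rw [Prod.mk.injEq]; constructor <;> ring

lemma mem_Ups3 {p : ℝ × ℝ} :
    p ∈ Ups 3 '' (cantor4 ×ˢ Icc (0 : ℝ) 1) ↔ 4 * p.1 - 2 ∈ cantor4 ∧ p.2 ∈ Icc (2⁻¹:ℝ) 1 := by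
  rw [Ups_three]
  constructor
  · rintro ⟨⟨u, v⟩, ⟨hu, hv⟩, heq⟩
    obtain ⟨h1, h2⟩ := Prod.mk.injEq .. ▸ heq
    simp only at h1 h2
    rw [← h1, ← h2]
    refine ⟨by rwa [show 4 * ((u+2)/4) - 2 = u by ring], ?_⟩
    simp only [mem_Icc] at hv ⊢
    constructor <;> linarith [hv.1, hv.2]
  · rintro ⟨h1, h2⟩
    refine ⟨(4 * p.1 - 2, 2 * p.2 - 1), ⟨h1, ?_⟩, ?_⟩
    · simp only [mem_Icc] at h2 ⊢; constructor <;> linarith [h2.1, h2.2]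
    · simp only; rw [Prod.mk.injEq]; constructor <;> ring

lemma ind_eq_of_iff {s : Set (ℝ × ℝ)} {t : Set ℝ} {p : ℝ × ℝ}
    (h : p ∈ s ↔ p.2 ∈ t) :
    indicator s (fun _ => (1:ℂ)) p = indicator t (fun _ => (1:ℂ)) p.2 := by
  by_cases hp : p ∈ s
  · rw [indicator_of_mem hp, indicator_of_mem (h.1 hp)]
  · rw [indicator_of_notMem hp, indicator_of_notMem (fun hc => hp (h.2 hc))]

lemma Hstep_eq_left (a : Fin 4 → Fin 4 → ℂ) (j : Fin 4) {x' : ℝ} (h : 4 * x' ∈ cantor4)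
    (w : ℝ) :
    Hstep a j (x', w) = a j 0 * indicator (Icc (0:ℝ) 2⁻¹) (fun _ => (1:ℂ)) w
      + a j 2 * indicator (Icc (2⁻¹:ℝ) 1) (fun _ => (1:ℂ)) w := by
  have hn : ¬(4 * x' - 2 ∈ cantor4) := fun hc => cantor4_not_both ⟨h, hc⟩
  rw [Hstep, Fin.sum_univ_four]
  have e0 : ((x', w) ∈ Ups 0 '' (cantor4 ×ˢ Icc (0 : ℝ) 1)) ↔
      ((x', w) : ℝ × ℝ).2 ∈ Icc (0:ℝ) 2⁻¹ := by
    rw [mem_Ups0]; exact ⟨fun hh => hh.2, fun hh => ⟨h, hh⟩⟩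
  have e2 : ((x', w) ∈ Ups 2 '' (cantor4 ×ˢ Icc (0 : ℝ) 1)) ↔
      ((x', w) : ℝ × ℝ).2 ∈ Icc (2⁻¹:ℝ) 1 := by
    rw [mem_Ups2]; exact ⟨fun hh => hh.2, fun hh => ⟨h, hh⟩⟩
  rw [ind_eq_of_iff e0, ind_eq_of_iff e2]
  rw [indicator_of_notMem (fun hc => hn (mem_Ups1.1 hc).1 : ((x':ℝ), w) ∉ _)]
  rw [indicator_of_notMem (fun hc => hn (mem_Ups3.1 hc).1 : ((x':ℝ), w) ∉ _)]
  ring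

lemma Hstep_eq_right (a : Fin 4 → Fin 4 → ℂ) (j : Fin 4) {x' : ℝ} (h : 4 * x' - 2 ∈ cantor4)
    (w : ℝ) :
    Hstep a j (x', w) = a j 1 * indicator (Icc (0:ℝ) 2⁻¹) (fun _ => (1:ℂ)) w
      + a j 3 * indicator (Icc (2⁻¹:ℝ) 1) (fun _ => (1:ℂ)) w := by
  have hn : ¬(4 * x' ∈ cantor4) := fun hc => cantor4_not_both ⟨hc, h⟩
  rw [Hstep, Fin.sum_univ_four]
  have e1 : ((x', w) ∈ Ups 1 '' (cantor4 ×ˢ Icc (0 : ℝ) 1)) ↔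
      ((x', w) : ℝ × ℝ).2 ∈ Icc (0:ℝ) 2⁻¹ := by
    rw [mem_Ups1]; exact ⟨fun hh => hh.2, fun hh => ⟨h, hh⟩⟩
  have e3 : ((x', w) ∈ Ups 3 '' (cantor4 ×ˢ Icc (0 : ℝ) 1)) ↔
      ((x', w) : ℝ × ℝ).2 ∈ Icc (2⁻¹:ℝ) 1 := by
    rw [mem_Ups3]; exact ⟨fun hh => hh.2, fun hh => ⟨h, hh⟩⟩
  rw [ind_eq_of_iff e1, ind_eq_of_iff e3]
  rw [indicator_of_notMem (fun hc => hn (mem_Ups0.1 hc).1 : ((x':ℝ), w) ∉ _)]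
  rw [indicator_of_notMem (fun hc => hn (mem_Ups2.1 hc).1 : ((x':ℝ), w) ∉ _)]
  ring

lemma Rmap_iter (i : ℕ) : ∀ x y : ℝ,
    Rmap^[i] (Int.fract x, Int.fract y) = (Int.fract (4^i * x), Int.fract (2^i * y)) := by
  induction i with
  | zero => intro x y; simp
  | succ n ih =>
    intro x y
    rw [Function.iterate_succ_apply]
    have h1 : Rmap (Int.fract x, Int.fract y) = (Int.fract (4*x), Int.fract (2*y)) := by
      rw [Rmap]
      simp only
      rw [show ((4:ℝ)) = ((4:ℤ):ℝ) by norm_num, fract_int_mul_fract,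
        show (((4:ℤ)):ℝ) = (4:ℝ) by norm_num]
      rw [show ((2:ℝ)) = ((2:ℤ):ℝ) by norm_num, fract_int_mul_fract,
        show (((2:ℤ)):ℝ) = (2:ℝ) by norm_num]
    rw [h1, show (Int.fract (4*x), Int.fract (2*y))
        = (Int.fract (4*x), Int.fract (2*y)) from rfl]
    have h2 := ih (4*x) (2*y)
    rw [h2]
    congr 1 <;> · congr 1; ring

noncomputable def chi0 : ℝ → ℂ := indicator (Icc (0:ℝ) 2⁻¹) (fun _ => (1:ℂ))
noncomputable def chi1 : ℝ → ℂ := indicator (Icc (2⁻¹:ℝ) 1) (fun _ => (1:ℂ))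

lemma chi0_meas : Measurable chi0 := measurable_const.indicator measurableSet_Icc
lemma chi1_meas : Measurable chi1 := measurable_const.indicator measurableSet_Icc
lemma chi0_norm_le (t : ℝ) : ‖chi0 t‖ ≤ 1 := by
  rw [chi0, indicator]; split_ifs <;> simp
lemma chi1_norm_le (t : ℝ) : ‖chi1 t‖ ≤ 1 := by
  rw [chi1, indicator]; split_ifs <;> simp

lemma integral_two_ind (c0 c1 : ℂ) :
    ∫ y in Icc (0:ℝ) 1, (c0 * chi0 y + c1 * chi1 y) = (c0 + c1)/2 := by
  have h0 : (fun y => c0 * chi0 y) = indicator (Icc (0:ℝ) 2⁻¹) (fun _ => c0) := by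
    funext y; rw [chi0, indicator, indicator]; split_ifs <;> simp
  have h1 : (fun y => c1 * chi1 y) = indicator (Icc (2⁻¹:ℝ) 1) (fun _ => c1) := by
    funext y; rw [chi1, indicator, indicator]; split_ifs <;> simp
  have hint0 : IntegrableOn (fun y => c0 * chi0 y) (Icc (0:ℝ) 1) volume := by
    rw [h0]
    apply (integrable_indicator_iff measurableSet_Icc).2
    apply (integrableOn_const_iff).2
    right
    exact lt_of_le_of_lt (Measure.restrict_apply_le _ _) measure_Icc_lt_top
  have hint1 : IntegrableOn (fun y => c1 * chi1 y) (Icc (0:ℝ) 1) volume := by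
    rw [h1]
    apply (integrable_indicator_iff measurableSet_Icc).2
    apply (integrableOn_const_iff).2
    right
    exact lt_of_le_of_lt (Measure.restrict_apply_le _ _) measure_Icc_lt_top
  rw [integral_add hint0 hint1]
  have e0 : ∫ y in Icc (0:ℝ) 1, c0 * chi0 y = c0 / 2 := by
    rw [h0, setIntegral_indicator measurableSet_Icc]
    rw [show Icc (0:ℝ) 1 ∩ Icc (0:ℝ) 2⁻¹ = Icc (0:ℝ) 2⁻¹ from
      inter_eq_self_of_subset_right (Icc_subset_Icc le_rfl (by norm_num))]
    rw [setIntegral_const, Measure.real, Real.volume_Icc]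
    rw [show ((2⁻¹:ℝ) - 0) = 2⁻¹ by norm_num, ENNReal.toReal_ofReal (by norm_num)]
    rw [Complex.real_smul]
    push_cast
    ring
  have e1 : ∫ y in Icc (0:ℝ) 1, c1 * chi1 y = c1 / 2 := by
    rw [h1, setIntegral_indicator measurableSet_Icc]
    rw [show Icc (0:ℝ) 1 ∩ Icc (2⁻¹:ℝ) 1 = Icc (2⁻¹:ℝ) 1 from
      inter_eq_self_of_subset_right (Icc_subset_Icc (by norm_num) le_rfl)]
    rw [setIntegral_const, Measure.real, Real.volume_Icc]
    rw [show ((1:ℝ) - 2⁻¹) = 2⁻¹ by norm_num, ENNReal.toReal_ofReal (by norm_num)]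
    rw [Complex.real_smul]
    push_cast
    ring
  rw [e0, e1]
  ring

lemma ae_ne_real (c : ℝ) : ∀ᵐ x : ℝ, x ≠ c := by
  have : volume {x : ℝ | ¬ x ≠ c} = 0 := by
    have : {x : ℝ | ¬ x ≠ c} = {c} := by ext x; simp
    rw [this]; exact measure_singleton c
  exact (ae_iff).2 this

lemma split_lower (G : ℝ → ℂ) :
    ∫ y in Icc (0:ℝ) 1, chi0 y * G (Int.fract (2*y)) = (2⁻¹:ℝ) • ∫ y in Icc (0:ℝ) 1, G y := by
  have h0 : (fun y => chi0 y * G (Int.fract (2*y)))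
      = indicator (Icc (0:ℝ) 2⁻¹) (fun y => G (Int.fract (2*y))) := by
    funext y; rw [chi0, indicator, indicator]; split_ifs <;> simp
  rw [h0, setIntegral_indicator measurableSet_Icc,
    show Icc (0:ℝ) 1 ∩ Icc (0:ℝ) 2⁻¹ = Icc (0:ℝ) 2⁻¹ from
      inter_eq_self_of_subset_right (Icc_subset_Icc le_rfl (by norm_num)),
    integral_Icc_eq_integral_Ioc, ← intervalIntegral.integral_of_le (by norm_num : (0:ℝ) ≤ 2⁻¹)]
  have hcong : ∫ y in (0:ℝ)..2⁻¹, G (Int.fract (2*y)) = ∫ y in (0:ℝ)..2⁻¹, G (2*y) := by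
    apply intervalIntegral.integral_congr_ae
    filter_upwards [ae_ne_real (2⁻¹:ℝ)] with y hy hmem
    rw [uIoc_of_le (by norm_num : (0:ℝ) ≤ 2⁻¹)] at hmem
    have h1 : (0:ℝ) ≤ 2*y := by have := hmem.1; linarith
    have h2 : 2*y < 1 := by
      rcases lt_or_eq_of_le hmem.2 with h | h
      · linarith
      · exact absurd h hy
    rw [Int.fract_eq_self.2 ⟨h1, h2⟩]
  rw [hcong, intervalIntegral.integral_comp_mul_left G (by norm_num : (2:ℝ) ≠ 0)]
  norm_num
  rw [intervalIntegral.integral_of_le (by norm_num : (0:ℝ) ≤ 1), ← integral_Icc_eq_integral_Ioc]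

lemma split_upper (G : ℝ → ℂ) :
    ∫ y in Icc (0:ℝ) 1, chi1 y * G (Int.fract (2*y)) = (2⁻¹:ℝ) • ∫ y in Icc (0:ℝ) 1, G y := by
  have h0 : (fun y => chi1 y * G (Int.fract (2*y)))
      = indicator (Icc (2⁻¹:ℝ) 1) (fun y => G (Int.fract (2*y))) := by
    funext y; rw [chi1, indicator, indicator]; split_ifs <;> simp
  rw [h0, setIntegral_indicator measurableSet_Icc,
    show Icc (0:ℝ) 1 ∩ Icc (2⁻¹:ℝ) 1 = Icc (2⁻¹:ℝ) 1 from
      inter_eq_self_of_subset_right (Icc_subset_Icc (by norm_num) le_rfl),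
    integral_Icc_eq_integral_Ioc, ← intervalIntegral.integral_of_le (by norm_num : (2⁻¹:ℝ) ≤ 1)]
  have hcong : ∫ y in (2⁻¹:ℝ)..1, G (Int.fract (2*y))
      = ∫ y in (2⁻¹:ℝ)..1, (fun t => G (t - 1)) (2*y) := by
    apply intervalIntegral.integral_congr_ae
    filter_upwards [ae_ne_real (1:ℝ)] with y hy hmem
    rw [uIoc_of_le (by norm_num : (2⁻¹:ℝ) ≤ 1)] at hmem
    have h1 : (0:ℝ) ≤ 2*y - 1 := by have := hmem.1; linarith
    have h2 : 2*y - 1 < 1 := by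
      rcases lt_or_eq_of_le hmem.2 with h | h
      · linarith
      · exact absurd h hy
    rw [show (2*y) = (2*y - 1) + ((1:ℤ):ℝ) by push_cast; ring, Int.fract_add_intCast,
      Int.fract_eq_self.2 ⟨h1, h2⟩]
    norm_num
  rw [hcong, intervalIntegral.integral_comp_mul_left (fun t => G (t - 1)) (by norm_num : (2:ℝ) ≠ 0)]
  norm_num
  rw [intervalIntegral.integral_of_le (by norm_num : (0:ℝ) ≤ 1), ← integral_Icc_eq_integral_Ioc]

noncomputable def Gfun (c : ℕ → ℂ × ℂ) (K : ℕ) (z : ℝ) : ℂ :=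
  ∏ i : Fin K, (2 * ((c i).1 * chi0 (Int.fract (2^(i:ℕ) * z))
    + (c i).2 * chi1 (Int.fract (2^(i:ℕ) * z))))

lemma Gfun_meas (c : ℕ → ℂ × ℂ) (K : ℕ) : Measurable (Gfun c K) := by
  apply Finset.measurable_prod
  intro i _
  apply Measurable.const_mul
  apply Measurable.add
  · exact (chi0_meas.comp (measurable_fract.comp (measurable_id.const_mul _))).const_mul _
  · exact (chi1_meas.comp (measurable_fract.comp (measurable_id.const_mul _))).const_mul _

lemma factor_bound (c : ℂ × ℂ) (t : ℝ) :
    ‖2 * (c.1 * chi0 t + c.2 * chi1 t)‖ ≤ 2 * (‖c.1‖ + ‖c.2‖) := by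
  rw [norm_mul]
  have h2 : ‖(2:ℂ)‖ = 2 := by norm_num
  rw [h2]
  apply mul_le_mul_of_nonneg_left _ (by norm_num)
  calc ‖c.1 * chi0 t + c.2 * chi1 t‖ ≤ ‖c.1 * chi0 t‖ + ‖c.2 * chi1 t‖ := norm_add_le _ _
    _ ≤ ‖c.1‖ + ‖c.2‖ := by
        rw [norm_mul, norm_mul]
        have := chi0_norm_le t
        have := chi1_norm_le t
        have n1 : ‖c.1‖ * ‖chi0 t‖ ≤ ‖c.1‖ * 1 := by
          apply mul_le_mul_of_nonneg_left (chi0_norm_le t) (norm_nonneg _)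
        have n2 : ‖c.2‖ * ‖chi1 t‖ ≤ ‖c.2‖ * 1 := by
          apply mul_le_mul_of_nonneg_left (chi1_norm_le t) (norm_nonneg _)
        linarith

lemma Gfun_bound (c : ℕ → ℂ × ℂ) (K : ℕ) (z : ℝ) :
    ‖Gfun c K z‖ ≤ ∏ i : Fin K, (2 * (‖(c i).1‖ + ‖(c i).2‖)) := by
  rw [Gfun, norm_prod]
  apply Finset.prod_le_prod (fun i _ => norm_nonneg _)
  intro i _
  exact factor_bound (c i) _


lemma integrable_bdd {f : ℝ → ℂ} (hm : Measurable f) (B : ℝ) (hb : ∀ y, ‖f y‖ ≤ B) :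
    IntegrableOn f (Icc (0:ℝ) 1) volume := by
  refine Integrable.mono' (g := fun _ => B) ?_ hm.aestronglyMeasurable (ae_of_all _ hb)
  exact (integrableOn_const_iff).2 (Or.inr measure_Icc_lt_top)

lemma Gfun_integral (c : ℕ → ℂ × ℂ) (K : ℕ) :
    ∫ y in Icc (0:ℝ) 1, Gfun c K y = ∏ i : Fin K, ((c i).1 + (c i).2) := by
  induction K generalizing c with
  | zero =>
    simp [Gfun, Real.volume_Icc]
  | succ K ih =>
    set c' : ℕ → ℂ × ℂ := fun i => c (i+1) with hc'
    have hfac : ∀ y : ℝ, Gfun c (K+1) y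
        = (2 * ((c 0).1 * chi0 (Int.fract y) + (c 0).2 * chi1 (Int.fract y)))
          * Gfun c' K (Int.fract (2*y)) := by
      intro y
      rw [Gfun, Fin.prod_univ_succ]
      congr 1
      · norm_num
      · rw [Gfun]
        apply Finset.prod_congr rfl
        intro i _
        have hfr : Int.fract (2^(i:ℕ) * Int.fract (2*y)) = Int.fract (2^((i:ℕ)+1) * y) := by
          rw [show ((2:ℝ)^(i:ℕ)) = (((2^(i:ℕ) : ℤ)):ℝ) by push_cast; ring, fract_int_mul_fract]
          congr 1
          push_cast
          ring
        simp only [Fin.val_succ, hc']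
        rw [hfr]
    have hG := Gfun_meas c' K
    have hint : ∀ (d : ℂ) (χ : ℝ → ℂ), Measurable χ → (∀ t, ‖χ t‖ ≤ 1) →
        IntegrableOn (fun y => d * (χ y * Gfun c' K (Int.fract (2*y)))) (Icc (0:ℝ) 1) volume := by
      intro d χ hχ hχb
      set B := ∏ i : Fin K, (2 * (‖(c' i).1‖ + ‖(c' i).2‖)) with hB
      apply integrable_bdd
        ((hχ.mul (hG.comp (measurable_fract.comp (measurable_id.const_mul 2)))).const_mul d)
        (‖d‖ * B)
      intro y
      rw [norm_mul, Pi.mul_apply, norm_mul]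
      have hBz := Gfun_bound c' K (Int.fract (2*y))
      have h1 : ‖χ y‖ * ‖Gfun c' K (Int.fract (2*y))‖ ≤ 1 * B :=
        mul_le_mul (hχb y) hBz (norm_nonneg _) (by norm_num)
      rw [one_mul] at h1
      exact mul_le_mul_of_nonneg_left h1 (norm_nonneg _)
    have step1 : ∫ y in Icc (0:ℝ) 1, Gfun c (K+1) y
        = ∫ y in Icc (0:ℝ) 1,
            ((2*(c 0).1) * (chi0 y * Gfun c' K (Int.fract (2*y)))
             + (2*(c 0).2) * (chi1 y * Gfun c' K (Int.fract (2*y)))) := by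
      apply setIntegral_congr_ae measurableSet_Icc
      filter_upwards [ae_ne_real 1] with y hy hmem
      rw [hfac y, Int.fract_eq_self.2 ⟨hmem.1, lt_of_le_of_ne hmem.2 hy⟩]
      ring
    rw [step1, integral_add (hint _ _ chi0_meas chi0_norm_le) (hint _ _ chi1_meas chi1_norm_le),
      integral_const_mul, integral_const_mul, split_lower, split_upper, ih c',
      Fin.prod_univ_succ]
    have hI : ∀ z : ℂ, (2⁻¹:ℝ) • z = z / 2 := by
      intro z; rw [Complex.real_smul]; push_cast; ring
    rw [hI]
    simp only [Fin.val_zero, Fin.val_succ, hc']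
    ring

end Aux

/-- if `a_{j0} + a_{j2} = a_{j1} + a_{j3}` for all `j`, then for every
word `ω = j_K … j_1` (a list with leftmost letter first; the factor for `j_k` involves
`R^{k-1}`), for μ₄-a.e. `x`:
`∫_{[0,1]} ∏_{k=1}^K 2 H_{j_k}(R^{k-1}(x,y)) dλ(y) = ∏_{k=1}^K 2 ∫_{[0,1]} H_{j_k}(4^{k-1}x mod 1, y) dλ(y)`,
and each factor `2 ∫_{[0,1]} H_{j_k}(4^{k-1}x mod 1, y) dλ(y)` equals `a_{j_k,0} + a_{j_k,2}`. -/
theorem integral_factorization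
    (μ₄ : Measure ℝ) [IsProbabilityMeasure μ₄]
    (hμ₄ : ∀ φ : ℝ → ℝ≥0∞, Measurable φ →
      ∫⁻ x, φ x ∂μ₄ =
        (1 / 2) * (∫⁻ x, φ (x / 4) ∂μ₄ + ∫⁻ x, φ ((x + 2) / 4) ∂μ₄))
    (a : Fin 4 → Fin 4 → ℂ) (ha : ∀ j, a j 0 + a j 2 = a j 1 + a j 3)
    (l : List (Fin 4)) :
    ∀ᵐ x ∂μ₄,
      ((∫ y in Icc (0 : ℝ) 1,
          ∏ i : Fin l.length,
            2 * Hstep a (l.getD (l.length - 1 - (i : ℕ)) 0) (Rmap^[(i : ℕ)] (x, y))) =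
        ∏ i : Fin l.length,
          2 * ∫ y in Icc (0 : ℝ) 1,
            Hstep a (l.getD (l.length - 1 - (i : ℕ)) 0)
              (Int.fract (4 ^ (i : ℕ) * x), y)) ∧
      ∀ i : Fin l.length,
        (2 * ∫ y in Icc (0 : ℝ) 1,
            Hstep a (l.getD (l.length - 1 - (i : ℕ)) 0)
              (Int.fract (4 ^ (i : ℕ) * x), y)) =
          a (l.getD (l.length - 1 - (i : ℕ)) 0) 0 +
            a (l.getD (l.length - 1 - (i : ℕ)) 0) 2 := by
  classical
  set K := l.length with hK
  set J : ℕ → Fin 4 := fun n => l.getD (l.length - 1 - n) 0 with hJ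
  have hKn : ∀ n, μ₄ (Kset n) = 1 := Kset_prob μ₄ hμ₄
  have hae : ∀ᵐ x ∂μ₄, ∀ n, x ∈ Kset n := by
    rw [MeasureTheory.ae_all_iff]
    intro n
    have hc : μ₄ (Kset n)ᶜ = 0 := by
      rw [measure_compl (Kset_meas n) (measure_ne_top _ _), hKn n, measure_univ, tsub_self]
    rw [ae_iff, ← Set.compl_def]
    exact hc
  filter_upwards [hae] with x hx
  have hxC : x ∈ cantor4 := iInter_Kset_subset_cantor4 (mem_iInter.2 hx)
  have hxi : ∀ i : ℕ, Int.fract (4^i * x) ∈ cantor4 := cantor4_fract_pow hxC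
  set c : ℕ → ℂ × ℂ := fun i =>
    if 4 * Int.fract (4^i * x) ∈ cantor4 then (a (J i) 0, a (J i) 2)
    else (a (J i) 1, a (J i) 3) with hc
  have hH : ∀ (i : ℕ) (w : ℝ),
      Hstep a (J i) (Int.fract (4^i*x), w) = (c i).1 * chi0 w + (c i).2 * chi1 w := by
    intro i w
    by_cases h : 4 * Int.fract (4^i*x) ∈ cantor4
    · rw [Hstep_eq_left a (J i) h w]
      simp [hc, h, chi0, chi1]
    · have h2 : 4 * Int.fract (4^i*x) - 2 ∈ cantor4 := (cantor4_cases (hxi i)).resolve_left h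
      rw [Hstep_eq_right a (J i) h2 w]
      simp [hc, h, chi0, chi1]
  have hsum : ∀ i : ℕ, (c i).1 + (c i).2 = a (J i) 0 + a (J i) 2 := by
    intro i
    by_cases h : 4 * Int.fract (4^i*x) ∈ cantor4
    · simp [hc, h]
    · simp only [hc, h, if_false]
      exact (ha (J i)).symm
  have hfactor : ∀ i : ℕ,
      (2 * ∫ y in Icc (0:ℝ) 1, Hstep a (J i) (Int.fract (4^i * x), y))
        = a (J i) 0 + a (J i) 2 := by
    intro i
    have he : (fun y => Hstep a (J i) (Int.fract (4^i*x), y))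
        = fun y => (c i).1 * chi0 y + (c i).2 * chi1 y := funext (hH i)
    rw [he, integral_two_ind, ← hsum i]
    ring
  constructor
  · have hL : (∫ y in Icc (0:ℝ) 1, ∏ i : Fin K, 2 * Hstep a (J (i:ℕ)) (Rmap^[(i:ℕ)] (x, y)))
        = ∫ y in Icc (0:ℝ) 1, Gfun c K y := by
      apply setIntegral_congr_ae measurableSet_Icc
      filter_upwards [ae_ne_real 1] with y hy hmem
      have hy1 : Int.fract y = y := Int.fract_eq_self.2 ⟨hmem.1, lt_of_le_of_ne hmem.2 hy⟩
      have hx1 : Int.fract x = x := cantor4_self_fract hxC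
      rw [Gfun]
      apply Finset.prod_congr rfl
      intro i _
      have hR : Rmap^[(i:ℕ)] (x, y) = (Int.fract (4^(i:ℕ)*x), Int.fract (2^(i:ℕ)*y)) := by
        conv_lhs => rw [← hx1, ← hy1]
        rw [Rmap_iter]
      rw [hR, hH (i:ℕ)]
    rw [hL, Gfun_integral]
    apply Finset.prod_congr rfl
    intro i _
    rw [hfactor (i:ℕ)]
    exact hsum (i:ℕ)
  · intro i
    exact hfactor (i:ℕ)
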